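/- arXiv:1103.2165 — 2 statements merged into one kernel-verified Lean document; each statement's English description precedes it below -/
import Mathlib

section
/- Monotonicity of guessing: for a satisfiable CNF formula F, α ∈ sat(F), x ∈ V(F), and l ∈ α, one has P_guessed(F^{[l]}, x, α, s) ≤ P_guessed(F, x, α, s). -/
attribute [local instance] Classical.propDecidable

noncomputable section

structure CNF where
  clauses : Finset (Finset (ℕ × Bool))
  vars : Finset ℕ

def litSat (α : ℕ → Bool) (l : ℕ × Bool) : Prop := α l.1 = l.2

def clauseSat (α : ℕ → Bool) (C : Finset (ℕ × Bool)) : Prop := ∃ l ∈ C, litSat α l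

def Sat (F : CNF) (α : ℕ → Bool) : Prop := ∀ C ∈ F.clauses, clauseSat α C

def CNF.Satisfiable (F : CNF) : Prop := ∃ α, Sat F α

/-- Restrict `F` by the literal `l` (set the variable of `l` so that `l` is true). -/
def restrict (F : CNF) (l : ℕ × Bool) : CNF :=
  ⟨(F.clauses.filter (fun C => l ∉ C)).image (fun C => C.filter (fun m => m ≠ (l.1, !l.2))),
   F.vars.erase l.1⟩

/-- A variable is frozen if all satisfying assignments agree on it. -/
def Frozen (F : CNF) (x : ℕ) : Prop :=
  x ∈ F.vars ∧ ∀ α β, Sat F α → Sat F β → α x = β x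

/-- Satisfying literals: literals over the variables whose restriction stays satisfiable. -/
def SL (F : CNF) : Finset (ℕ × Bool) :=
  (F.vars ×ˢ ({true, false} : Finset Bool)).filter (fun l => (restrict F l).Satisfiable)

/-- Probability that `AssignSatisfiableLiterals` outputs `α` (with fuel). -/
def prAux : ℕ → CNF → (ℕ → Bool) → ℝ
  | 0, _, _ => 1
  | n+1, F, α =>
    if F.vars = ∅ then 1
    else ((SL F).card : ℝ)⁻¹ *
      ∑ l ∈ (SL F).filter (fun l => litSat α l), prAux n (restrict F l) α

def pr (F : CNF) (α : ℕ → Bool) : ℝ := prAux F.vars.card F α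

/-- A literal is `s`-implied if it is implied by at most `s` clauses of `F`. -/
def sImplied (F : CNF) (s : ℕ) (l : ℕ × Bool) : Prop :=
  ∃ G : Finset (Finset (ℕ × Bool)), G ⊆ F.clauses ∧ G.card ≤ s ∧
    ∀ α : ℕ → Bool, (∀ C ∈ G, clauseSat α C) → litSat α l

def ImplicationFree (F : CNF) (s : ℕ) : Prop :=
  ∀ l : ℕ × Bool, l.1 ∈ F.vars → ¬ sImplied F s l

def impliedVars (F : CNF) (s : ℕ) : Finset ℕ :=
  F.vars.filter (fun x => sImplied F s (x, true) ∨ sImplied F s (x, false))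

def impliedVal (F : CNF) (s : ℕ) (x : ℕ) : Bool :=
  if sImplied F s (x, true) then true else false

def closureAux (s : ℕ) : ℕ → CNF → CNF
  | 0, F => F
  | n+1, F =>
    if h : (impliedVars F s).Nonempty then
      closureAux s n (restrict F ((impliedVars F s).min' h, impliedVal F s ((impliedVars F s).min' h)))
    else F

/-- Repeatedly fix all `s`-implied literals. -/
def pclosure (s : ℕ) (F : CNF) : CNF := closureAux s F.vars.card F

/-- `x` is guessed in the run of PPSZ with assignment `β` and permutation `π`. -/
def Guessed (s : ℕ) (β : ℕ → Bool) (x : ℕ) : CNF → List ℕ → Prop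
  | _, [] => False
  | F, y :: π =>
    if x ∉ (pclosure s F).vars then False
    else if y = x then True
    else Guessed s β x
      (if y ∈ (pclosure s F).vars then restrict (pclosure s F) (y, β y) else pclosure s F) π

/-- Probability over a uniformly random permutation of the variables that `x` is guessed. -/
def Pguessed (s : ℕ) (F : CNF) (x : ℕ) (α : ℕ → Bool) : ℝ :=
  ((F.vars.toList.permutations.countP (fun π => decide (Guessed s α x F π))) : ℝ) /
    (Nat.factorial F.vars.card)

/-- The final restricted formula of a PPSZ run. -/
def runPPSZ (s : ℕ) (β : ℕ → Bool) : CNF → List ℕ → CNF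
  | F, [] => pclosure s F
  | F, y :: π =>
    runPPSZ s β
      (if y ∈ (pclosure s F).vars then restrict (pclosure s F) (y, β y) else pclosure s F) π

/-- Success probability of PPSZ over uniform `β` and uniform permutation. -/
def psuccess (s : ℕ) (F : CNF) : ℝ :=
  (∑ b ∈ F.vars.powerset,
    ((F.vars.toList.permutations.countP
      (fun π => decide ((runPPSZ s (fun y => decide (y ∈ b)) F π).clauses = ∅))) : ℝ)) /
  (2 ^ F.vars.card * Nat.factorial F.vars.card)

def asg (b : Finset ℕ) : ℕ → Bool := fun y => decide (y ∈ b)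

/-- The satisfying assignments of `F`, encoded as subsets of the variable set. -/
def satAssignments (F : CNF) : Finset (Finset ℕ) :=
  F.vars.powerset.filter (fun b => Sat F (asg b))

/-- The PPSZ cost of variable `x` in `F`, with guessing bound `S`. -/
def cost (s : ℕ) (S : ℝ) (F : CNF) (x : ℕ) : ℝ :=
  if x ∉ F.vars then 0
  else if Frozen F x then
    ∑ b ∈ satAssignments F, pr F (asg b) * Pguessed s F x (asg b)
  else S

def totalCost (s : ℕ) (S : ℝ) (F : CNF) : ℝ := ∑ x ∈ F.vars, cost s S F x


section Chunk1
variable (α : ℕ → Bool)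

theorem CNF.ext' {G H : CNF} (h1 : G.clauses = H.clauses) (h2 : G.vars = H.vars) : G = H := by
  cases G; cases H; simp_all

/-- Simultaneous restriction by the `α`-literals of variables in `W`. -/
def restrictA (G : CNF) (W : Finset ℕ) : CNF :=
  ⟨(G.clauses.filter (fun C => ∀ w ∈ W, (w, α w) ∉ C)).image
      (fun C => C.filter (fun m => m.1 ∉ W)),
   G.vars \ W⟩

theorem mem_clauses_restrict' {G : CNF} {z : ℕ} {D : Finset (ℕ × Bool)} :
    D ∈ (restrict G (z, α z)).clauses ↔
      ∃ C ∈ G.clauses, (z, α z) ∉ C ∧ C.filter (fun m => m ≠ ((z:ℕ), !α z)) = D := by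
  simp [restrict, Finset.mem_image, Finset.mem_filter]
  tauto

@[simp] theorem vars_restrictA (G : CNF) (W : Finset ℕ) :
    (restrictA α G W).vars = G.vars \ W := rfl

theorem mem_clauses_restrictA {G : CNF} {W : Finset ℕ} {D : Finset (ℕ × Bool)} :
    D ∈ (restrictA α G W).clauses ↔
      ∃ C ∈ G.clauses, (∀ w ∈ W, (w, α w) ∉ C) ∧ C.filter (fun m => m.1 ∉ W) = D := by
  simp [restrictA, Finset.mem_image, Finset.mem_filter]
  tauto

theorem mem_clauses_restrict {G : CNF} {l : ℕ × Bool} {D : Finset (ℕ × Bool)} :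
    D ∈ (restrict G l).clauses ↔
      ∃ C ∈ G.clauses, l ∉ C ∧ C.filter (fun m => m ≠ (l.1, !l.2)) = D := by
  simp [restrict, Finset.mem_image, Finset.mem_filter]
  tauto

@[simp] theorem vars_restrict (G : CNF) (l : ℕ × Bool) :
    (restrict G l).vars = G.vars.erase l.1 := rfl

@[simp] theorem restrictA_empty (G : CNF) : restrictA α G ∅ = G := by
  apply CNF.ext'
  · ext D
    rw [mem_clauses_restrictA]
    constructor
    · rintro ⟨C, hC, -, rfl⟩
      simpa using hC
    · intro hD
      exact ⟨D, hD, by simp, by simp⟩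
  · simp

theorem filter_filter_aux {z : ℕ} {C : Finset (ℕ × Bool)} (hzC : (z, α z) ∉ C)
    (W : Finset ℕ) :
    (C.filter (fun m => m.1 ∉ W)).filter (fun m => m ≠ ((z:ℕ), !α z)) =
      C.filter (fun m => m.1 ∉ insert z W) := by
  ext m
  obtain ⟨m1, m2⟩ := m
  simp only [Finset.mem_filter, Finset.mem_insert, not_or, Prod.mk.injEq, not_and]
  constructor
  · rintro ⟨⟨hmC, hmW⟩, hm2⟩
    refine ⟨hmC, ⟨?_, hmW⟩⟩
    intro h1
    rcases Bool.eq_or_eq_not m2 (α z) with h2 | h2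
    · subst h1; subst h2; exact hzC hmC
    · subst h1; subst h2; exact hm2 rfl
  · rintro ⟨hmC, h1, hmW⟩
    exact ⟨⟨hmC, hmW⟩, fun h => h1 (congrArg Prod.fst h)⟩

theorem restrict_restrictA (G : CNF) (W : Finset ℕ) (z : ℕ) :
    restrict (restrictA α G W) (z, α z) = restrictA α G (insert z W) := by
  apply CNF.ext'
  · ext D
    rw [mem_clauses_restrict' α, mem_clauses_restrictA]
    constructor
    · rintro ⟨E, hE, hzE, rfl⟩
      rw [mem_clauses_restrictA] at hE
      obtain ⟨C, hC, hW, rfl⟩ := hE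
      have hzC : (z, α z) ∉ C := by
        intro hz
        by_cases hzW : z ∈ W
        · exact hW z hzW hz
        · exact hzE (Finset.mem_filter.2 ⟨hz, by simpa using hzW⟩)
      refine ⟨C, hC, ?_, ?_⟩
      · intro w hw
        rcases Finset.mem_insert.1 hw with rfl | hw
        · exact hzC
        · exact hW w hw
      · exact (filter_filter_aux α hzC W).symm
    · rintro ⟨C, hC, hW, rfl⟩
      have hzC : (z, α z) ∉ C := hW z (Finset.mem_insert_self z W)
      refine ⟨C.filter (fun m => m.1 ∉ W), ?_, ?_, ?_⟩
      · rw [mem_clauses_restrictA]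
        exact ⟨C, hC, fun w hw => hW w (Finset.mem_insert_of_mem hw), rfl⟩
      · simp only [Finset.mem_filter, not_and]
        intro h; exact absurd h hzC
      · exact filter_filter_aux α hzC W
  · ext a
    simp only [vars_restrict, vars_restrictA, Finset.mem_erase, Finset.mem_sdiff,
      Finset.mem_insert, not_or]
    tauto

theorem restrict_eq_restrictA (G : CNF) (z : ℕ) :
    restrict G (z, α z) = restrictA α G {z} := by
  have := restrict_restrictA α G ∅ z
  simpa using this

theorem restrictA_restrictA (G : CNF) (W U : Finset ℕ) :
    restrictA α (restrictA α G W) U = restrictA α G (W ∪ U) := by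
  induction U using Finset.induction_on with
  | empty => simp
  | @insert z U hz ih =>
    rw [← restrict_restrictA, ih, restrict_restrictA, Finset.union_insert]

end Chunk1
section Chunk2
variable (α : ℕ → Bool) (s : ℕ)

theorem sat_restrictA {G : CNF} (hG : Sat G α) (W : Finset ℕ) :
    Sat (restrictA α G W) α := by
  intro D hD
  rw [mem_clauses_restrictA] at hD
  obtain ⟨C, hC, hW, rfl⟩ := hD
  obtain ⟨m, hm, hms⟩ := hG C hC
  refine ⟨m, Finset.mem_filter.2 ⟨hm, ?_⟩, hms⟩
  intro hmW
  have : m = (m.1, α m.1) := by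
    obtain ⟨m1, m2⟩ := m
    simp only [Prod.mk.injEq, true_and]
    exact hms.symm
  exact hW m.1 hmW (by rw [← this]; exact hm)

theorem sImplied_restrict {G : CNF} {m l : ℕ × Bool} (h : sImplied G s m)
    (hne : m.1 ≠ l.1) : sImplied (restrict G l) s m := by
  obtain ⟨G₀, hsub, hcard, himp⟩ := h
  refine ⟨(G₀.filter (fun C => l ∉ C)).image (fun C => C.filter (fun m => m ≠ (l.1, !l.2))),
    ?_, ?_, ?_⟩
  · intro D hD
    rw [Finset.mem_image] at hD
    obtain ⟨C, hC, rfl⟩ := hD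
    rw [Finset.mem_filter] at hC
    rw [mem_clauses_restrict]
    exact ⟨C, hsub hC.1, hC.2, rfl⟩
  · exact le_trans Finset.card_image_le (le_trans (Finset.card_filter_le _ _) hcard)
  · intro β hβ
    set β' : ℕ → Bool := Function.update β l.1 l.2 with hβ'def
    have hβ'G : ∀ C ∈ G₀, clauseSat β' C := by
      intro C hC
      by_cases hlC : l ∈ C
      · exact ⟨l, hlC, by simp [litSat, hβ'def, Function.update_self]⟩
      · have hD : clauseSat β (C.filter (fun m => m ≠ (l.1, !l.2))) := by
          apply hβ
          rw [Finset.mem_image]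
          exact ⟨C, Finset.mem_filter.2 ⟨hC, hlC⟩, rfl⟩
        obtain ⟨m', hm', hm's⟩ := hD
        rw [Finset.mem_filter] at hm'
        have hm'1 : m'.1 ≠ l.1 := by
          intro h1
          rcases Bool.eq_or_eq_not m'.2 l.2 with h2 | h2
          · have : m' = l := Prod.ext h1 h2
            rw [← this] at hlC; exact absurd hm'.1 hlC
          · apply hm'.2
            exact Prod.ext h1 h2
        refine ⟨m', hm'.1, ?_⟩
        rwa [litSat, hβ'def, Function.update_of_ne hm'1]
    have := himp β' hβ'G
    rwa [litSat, hβ'def, Function.update_of_ne hne] at this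

theorem sImplied_restrictA {G : CNF} {m : ℕ × Bool} (h : sImplied G s m)
    {W : Finset ℕ} (hW : m.1 ∉ W) : sImplied (restrictA α G W) s m := by
  induction W using Finset.induction_on with
  | empty => simpa using h
  | @insert z U hz ih =>
    rw [← restrict_restrictA]
    have h1 : m.1 ∉ U := fun hc => hW (Finset.mem_insert_of_mem hc)
    have h2 : m.1 ≠ z := fun hc => hW (by rw [hc]; exact Finset.mem_insert_self z U)
    exact sImplied_restrict s (ih h1) h2

theorem sImplied_alpha {G : CNF} (hG : Sat G α) {v : ℕ} {b : Bool}
    (h : sImplied G s (v, b)) : α v = b := by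
  obtain ⟨G₀, hsub, -, himp⟩ := h
  exact himp α (fun C hC => hG C (hsub hC))

theorem implied_mem {G : CNF} (hG : Sat G α) {v : ℕ} (hv : v ∈ impliedVars G s) :
    sImplied G s (v, α v) ∧ impliedVal G s v = α v := by
  rw [impliedVars, Finset.mem_filter] at hv
  rcases hv.2 with h | h
  · have : α v = true := sImplied_alpha α s hG h
    constructor
    · rwa [this]
    · rw [impliedVal, if_pos h, this]
  · have hf : α v = false := sImplied_alpha α s hG h
    by_cases ht : sImplied G s (v, true)
    · have : α v = true := sImplied_alpha α s hG ht
      rw [this] at hf; exact absurd hf (by simp)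
    · constructor
      · rwa [hf]
      · rw [impliedVal, if_neg ht, hf]

end Chunk2
section Chunk3
variable (α : ℕ → Bool) (s : ℕ)

theorem impliedVars_subset (G : CNF) : impliedVars G s ⊆ G.vars :=
  Finset.filter_subset _ _

theorem vars_closureAux_subset : ∀ (n : ℕ) (G : CNF), (closureAux s n G).vars ⊆ G.vars := by
  intro n
  induction n with
  | zero => intro G; exact Finset.Subset.refl _
  | succ n ih =>
    intro G
    rw [closureAux]
    split
    · next h =>
      refine (ih _).trans ?_
      rw [vars_restrict]
      exact Finset.erase_subset _ _
    · exact Finset.Subset.refl _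

theorem closureAux_of_empty {G : CNF} (h : ¬(impliedVars G s).Nonempty) :
    ∀ n, closureAux s n G = G := by
  intro n
  cases n with
  | zero => rfl
  | succ n => rw [closureAux, dif_neg h]

theorem card_vars_restrict_min {G : CNF} (h : (impliedVars G s).Nonempty) (b : Bool) :
    (restrict G ((impliedVars G s).min' h, b)).vars.card = G.vars.card - 1 := by
  rw [vars_restrict]
  exact Finset.card_erase_of_mem (impliedVars_subset s G ((impliedVars G s).min'_mem h))

theorem closureAux_fuel : ∀ (n k : ℕ) (G : CNF), G.vars.card ≤ n → G.vars.card ≤ k →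
    closureAux s n G = closureAux s k G := by
  intro n
  induction n with
  | zero =>
    intro k G hn hk
    have hv : G.vars = ∅ := Finset.card_eq_zero.1 (Nat.le_zero.1 hn)
    have hie : ¬(impliedVars G s).Nonempty := by
      rw [Finset.not_nonempty_iff_eq_empty]
      have := impliedVars_subset s G
      rw [hv] at this
      exact Finset.subset_empty.1 this
    rw [closureAux_of_empty s hie, closureAux_of_empty s hie]
  | succ n ih =>
    intro k G hn hk
    cases k with
    | zero =>
      have hv : G.vars = ∅ := Finset.card_eq_zero.1 (Nat.le_zero.1 hk)
      have hie : ¬(impliedVars G s).Nonempty := by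
        rw [Finset.not_nonempty_iff_eq_empty]
        have := impliedVars_subset s G
        rw [hv] at this
        exact Finset.subset_empty.1 this
      rw [closureAux_of_empty s hie, closureAux_of_empty s hie]
    | succ k =>
      by_cases h : (impliedVars G s).Nonempty
      · rw [closureAux, dif_pos h, closureAux, dif_pos h]
        set G₁ := restrict G ((impliedVars G s).min' h, impliedVal G s ((impliedVars G s).min' h))
        have hc : G₁.vars.card = G.vars.card - 1 := card_vars_restrict_min s h _
        have hpos : 1 ≤ G.vars.card :=
          Finset.card_pos.2 ⟨_, impliedVars_subset s G ((impliedVars G s).min'_mem h)⟩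
        exact ih k G₁ (by omega) (by omega)
      · rw [closureAux_of_empty s h, closureAux_of_empty s h]

theorem closureAux_eq_pclosure {n : ℕ} {G : CNF} (h : G.vars.card ≤ n) :
    closureAux s n G = pclosure s G :=
  closureAux_fuel s n G.vars.card G h (le_refl _)

theorem pclosure_step {G : CNF} (h : (impliedVars G s).Nonempty) :
    pclosure s G = pclosure s
      (restrict G ((impliedVars G s).min' h, impliedVal G s ((impliedVars G s).min' h))) := by
  have hpos : 1 ≤ G.vars.card :=
    Finset.card_pos.2 ⟨_, impliedVars_subset s G ((impliedVars G s).min'_mem h)⟩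
  have hcard : G.vars.card = (G.vars.card - 1) + 1 := by omega
  rw [pclosure, hcard, closureAux, dif_pos h]
  exact closureAux_eq_pclosure s (by rw [card_vars_restrict_min s h])

theorem impliedVars_pclosure (G : CNF) : impliedVars (pclosure s G) s = ∅ := by
  suffices h : ∀ (n : ℕ) (G : CNF), G.vars.card ≤ n → impliedVars (closureAux s n G) s = ∅ by
    exact h _ _ (le_refl _)
  intro n
  induction n with
  | zero =>
    intro G hn
    have hv : G.vars = ∅ := Finset.card_eq_zero.1 (Nat.le_zero.1 hn)
    rw [closureAux]
    rw [← Finset.subset_empty, ← hv]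
    exact impliedVars_subset s G
  | succ n ih =>
    intro G hn
    by_cases h : (impliedVars G s).Nonempty
    · rw [closureAux, dif_pos h]
      have hpos : 1 ≤ G.vars.card :=
        Finset.card_pos.2 ⟨_, impliedVars_subset s G ((impliedVars G s).min'_mem h)⟩
      exact ih _ (by rw [card_vars_restrict_min s h]; omega)
    · rw [closureAux, dif_neg h]
      exact Finset.not_nonempty_iff_eq_empty.1 h

theorem pclosure_pclosure (G : CNF) : pclosure s (pclosure s G) = pclosure s G := by
  have h : ¬(impliedVars (pclosure s G) s).Nonempty := by
    rw [impliedVars_pclosure]; exact Finset.not_nonempty_empty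
  exact closureAux_of_empty s h _

theorem pclosure_eq_restrictA {G : CNF} (hG : Sat G α) :
    ∃ W ⊆ G.vars, pclosure s G = restrictA α G W := by
  suffices h : ∀ (n : ℕ) (G : CNF), G.vars.card ≤ n → Sat G α →
      ∃ W ⊆ G.vars, closureAux s n G = restrictA α G W by
    exact h _ _ (le_refl _) hG
  intro n
  induction n with
  | zero =>
    intro G hn _
    exact ⟨∅, Finset.empty_subset _, by rw [closureAux]; simp⟩
  | succ n ih =>
    intro G hn hG
    by_cases h : (impliedVars G s).Nonempty
    · rw [closureAux, dif_pos h]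
      set v := (impliedVars G s).min' h with hv
      have hvmem : v ∈ impliedVars G s := (impliedVars G s).min'_mem h
      have hval : impliedVal G s v = α v := (implied_mem α s hG hvmem).2
      have hres : restrict G (v, impliedVal G s v) = restrictA α G {v} := by
        rw [hval]; exact restrict_eq_restrictA α G v
      have hpos : 1 ≤ G.vars.card :=
        Finset.card_pos.2 ⟨_, impliedVars_subset s G hvmem⟩
      have hcard : (restrict G (v, impliedVal G s v)).vars.card ≤ n := by
        rw [card_vars_restrict_min s h]; omega
      obtain ⟨W₁, hW₁, hcl⟩ := ih _ hcard (by rw [hres]; exact sat_restrictA α hG _)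
      refine ⟨{v} ∪ W₁, ?_, ?_⟩
      · apply Finset.union_subset
        · simpa using impliedVars_subset s G hvmem
        · refine hW₁.trans ?_
          rw [vars_restrict]
          exact Finset.erase_subset _ _
      · rw [hcl, hres, restrictA_restrictA]
    · rw [closureAux, dif_neg h]
      exact ⟨∅, Finset.empty_subset _, by simp⟩

theorem sat_pclosure {G : CNF} (hG : Sat G α) : Sat (pclosure s G) α := by
  obtain ⟨W, -, hW⟩ := pclosure_eq_restrictA α s hG
  rw [hW]
  exact sat_restrictA α hG W

end Chunk3
section Chunk4
variable (α : ℕ → Bool) (s : ℕ)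

theorem mem_clauses_restrict_restrict {G : CNF} {a b : ℕ × Bool} (hab : b ≠ (a.1, !a.2))
    {D : Finset (ℕ × Bool)} :
    D ∈ (restrict (restrict G a) b).clauses ↔
      ∃ C ∈ G.clauses, (a ∉ C ∧ b ∉ C) ∧
        C.filter (fun m => m ≠ (a.1, !a.2) ∧ m ≠ (b.1, !b.2)) = D := by
  rw [mem_clauses_restrict]
  constructor
  · rintro ⟨E, hE, hbE, rfl⟩
    rw [mem_clauses_restrict] at hE
    obtain ⟨C, hC, haC, rfl⟩ := hE
    have hbC : b ∉ C := by
      intro hb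
      exact hbE (Finset.mem_filter.2 ⟨hb, hab⟩)
    exact ⟨C, hC, ⟨haC, hbC⟩, by rw [Finset.filter_filter]⟩
  · rintro ⟨C, hC, ⟨haC, hbC⟩, rfl⟩
    refine ⟨C.filter (fun m => m ≠ (a.1, !a.2)), ?_, ?_, ?_⟩
    · rw [mem_clauses_restrict]; exact ⟨C, hC, haC, rfl⟩
    · intro hb
      exact hbC (Finset.mem_filter.1 hb).1
    · rw [Finset.filter_filter]

theorem restrict_comm {a b : ℕ × Bool} (h : a.1 ≠ b.1) (G : CNF) :
    restrict (restrict G a) b = restrict (restrict G b) a := by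
  have hab : b ≠ (a.1, !a.2) := fun hc => h (by rw [hc])
  have hba : a ≠ (b.1, !b.2) := fun hc => h.symm (by rw [hc])
  apply CNF.ext'
  · ext D
    rw [mem_clauses_restrict_restrict hab, mem_clauses_restrict_restrict hba]
    constructor <;> rintro ⟨C, hC, ⟨h1, h2⟩, rfl⟩ <;>
      exact ⟨C, hC, ⟨h2, h1⟩, by ext m; simp only [Finset.mem_filter]; tauto⟩
  · simp only [vars_restrict]
    ext a
    simp only [Finset.mem_erase]
    tauto

theorem mem_impliedVars_of_alpha {G : CNF} {v : ℕ} (hv : v ∈ G.vars)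
    (h : sImplied G s (v, α v)) : v ∈ impliedVars G s := by
  rw [impliedVars, Finset.mem_filter]
  refine ⟨hv, ?_⟩
  rcases Bool.eq_false_or_eq_true (α v) with hb | hb <;> rw [hb] at h
  · exact Or.inl h
  · exact Or.inr h

theorem vars_pclosure_restrict_implied {G : CNF} {v : ℕ}
    (hG : Sat G α) (himp : sImplied G s (v, α v)) (hv : v ∈ G.vars) :
    (pclosure s (restrict G (v, α v))).vars = (pclosure s G).vars := by
  suffices key : ∀ (N : ℕ) (G : CNF) (v : ℕ), G.vars.card ≤ N → Sat G α →
      sImplied G s (v, α v) → v ∈ G.vars →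
      (pclosure s (restrict G (v, α v))).vars = (pclosure s G).vars by
    exact key _ _ _ (le_refl _) hG himp hv
  intro N
  induction N with
  | zero =>
    intro G v hN _ _ hv
    exact absurd (Finset.card_eq_zero.1 (Nat.le_zero.1 hN) ▸ hv) (Finset.notMem_empty v)
  | succ N ih =>
    intro G v hN hG himp hv
    have h : (impliedVars G s).Nonempty := ⟨v, mem_impliedVars_of_alpha α s hv himp⟩
    set w := (impliedVars G s).min' h with hwdef
    have hwmem : w ∈ impliedVars G s := (impliedVars G s).min'_mem h
    have hwv : w ∈ G.vars := impliedVars_subset s G hwmem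
    obtain ⟨hwimp, hwval⟩ := implied_mem α s hG hwmem
    have hstep : pclosure s G = pclosure s (restrict G (w, α w)) := by
      rw [pclosure_step s h, ← hwdef, hwval]
    by_cases hweq : w = v
    · rw [hstep, hweq]
    · set G₁ := restrict G (w, α w) with hG₁
      set G₂ := restrict G (v, α v) with hG₂
      have hsatG₁ : Sat G₁ α := by
        rw [hG₁, restrict_eq_restrictA]; exact sat_restrictA α hG _
      have hsatG₂ : Sat G₂ α := by
        rw [hG₂, restrict_eq_restrictA]; exact sat_restrictA α hG _
      have hcard₁ : G₁.vars.card ≤ N := by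
        rw [hG₁, vars_restrict, Finset.card_erase_of_mem hwv]; omega
      have hcard₂ : G₂.vars.card ≤ N := by
        rw [hG₂, vars_restrict, Finset.card_erase_of_mem hv]; omega
      have hIH₁ := ih G₁ v hcard₁ hsatG₁
        (sImplied_restrict s himp (fun hc => hweq hc.symm))
        (by rw [hG₁, vars_restrict]; exact Finset.mem_erase.2 ⟨fun hc => hweq hc.symm, hv⟩)
      have hIH₂ := ih G₂ w hcard₂ hsatG₂
        (sImplied_restrict s hwimp hweq)
        (by rw [hG₂, vars_restrict]; exact Finset.mem_erase.2 ⟨hweq, hwv⟩)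
      have hcomm : restrict G₁ (v, α v) = restrict G₂ (w, α w) := by
        rw [hG₁, hG₂]
        exact restrict_comm (show ((w:ℕ), α w).1 ≠ ((v:ℕ), α v).1 from hweq) G
      rw [hstep, ← hIH₁, hcomm, hIH₂]

theorem M1_aux : ∀ (n : ℕ) (G : CNF) (W : Finset ℕ) (x : ℕ), Sat G α → G.vars.card ≤ n →
    x ∉ (closureAux s n G).vars → x ∉ (pclosure s (restrictA α G W)).vars := by
  intro n
  induction n with
  | zero =>
    intro G W x hG hn hx
    rw [closureAux] at hx
    intro hc
    have h1 := vars_closureAux_subset s _ (restrictA α G W) hc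
    rw [vars_restrictA] at h1
    exact hx (Finset.mem_sdiff.1 h1).1
  | succ n ih =>
    intro G W x hG hn hx
    by_cases h : (impliedVars G s).Nonempty
    · rw [closureAux, dif_pos h] at hx
      set v := (impliedVars G s).min' h with hvdef
      have hvmem : v ∈ impliedVars G s := (impliedVars G s).min'_mem h
      have hvv : v ∈ G.vars := impliedVars_subset s G hvmem
      obtain ⟨hvimp, hvval⟩ := implied_mem α s hG hvmem
      have hres : restrict G (v, impliedVal G s v) = restrictA α G {v} := by
        rw [hvval]; exact restrict_eq_restrictA α G v
      have hsat₁ : Sat (restrictA α G {v}) α := sat_restrictA α hG _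
      have hcard₁ : (restrictA α G {v}).vars.card ≤ n := by
        have : (restrict G (v, impliedVal G s v)).vars.card = G.vars.card - 1 :=
          card_vars_restrict_min s h _
        rw [hres] at this
        omega
      rw [hres] at hx
      by_cases hvW : v ∈ W
      · have := ih (restrictA α G {v}) W x hsat₁ hcard₁ hx
        rwa [restrictA_restrictA, Finset.union_eq_right.2 (Finset.singleton_subset_iff.2 hvW)]
          at this
      · have hres2 := ih (restrictA α G {v}) W x hsat₁ hcard₁ hx
        rw [restrictA_restrictA] at hres2
        have hunion : ({v} : Finset ℕ) ∪ W = W ∪ {v} := Finset.union_comm _ _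
        rw [hunion, ← restrictA_restrictA, ← restrict_eq_restrictA] at hres2
        set G' := restrictA α G W with hG'
        have hsatG' : Sat G' α := sat_restrictA α hG _
        have himpG' : sImplied G' s (v, α v) :=
          sImplied_restrictA α s hvimp (by simpa using hvW)
        have hvG' : v ∈ G'.vars := by
          rw [hG', vars_restrictA]; exact Finset.mem_sdiff.2 ⟨hvv, hvW⟩
        rwa [vars_pclosure_restrict_implied α s hsatG' himpG' hvG'] at hres2
    · rw [closureAux, dif_neg h] at hx
      intro hc
      have h1 := vars_closureAux_subset s _ (restrictA α G W) hc
      rw [vars_restrictA] at h1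
      exact hx (Finset.mem_sdiff.1 h1).1

theorem vars_pclosure_restrictA_subset {G : CNF} (hG : Sat G α) (W : Finset ℕ) :
    (pclosure s (restrictA α G W)).vars ⊆ (pclosure s G).vars := by
  intro x hx
  by_contra hc
  exact M1_aux α s G.vars.card G W x hG (le_refl _) hc hx

end Chunk4
section Chunk5
variable (α : ℕ → Bool) (s : ℕ) (x : ℕ)

/-- One PPSZ step. -/
def stepF (s : ℕ) (β : ℕ → Bool) (G : CNF) (z : ℕ) : CNF :=
  if z ∈ (pclosure s G).vars then restrict (pclosure s G) (z, β z) else pclosure s G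

theorem Guessed_nil (β : ℕ → Bool) (G : CNF) : ¬ Guessed s β x G [] := fun h => h

theorem Guessed_cons (β : ℕ → Bool) (G : CNF) (z : ℕ) (π : List ℕ) :
    Guessed s β x G (z :: π) =
      (if x ∉ (pclosure s G).vars then False
       else if z = x then True
       else Guessed s β x (stepF s β G z) π) := rfl

theorem Guessed_mem_vars {β : ℕ → Bool} {G : CNF} {π : List ℕ}
    (h : Guessed s β x G π) : x ∈ (pclosure s G).vars := by
  cases π with
  | nil => exact absurd h (Guessed_nil s x β G)
  | cons z rest =>
    rw [Guessed_cons] at h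
    by_contra hc
    rw [if_pos hc] at h
    exact h

theorem Guessed_pclosure (β : ℕ → Bool) (G : CNF) (π : List ℕ) :
    Guessed s β x (pclosure s G) π ↔ Guessed s β x G π := by
  cases π with
  | nil => exact Iff.rfl
  | cons z rest =>
    rw [Guessed_cons, Guessed_cons, pclosure_pclosure]
    have hstep : stepF s β (pclosure s G) z = stepF s β G z := by
      rw [stepF, stepF, pclosure_pclosure]
    rw [hstep]

theorem sat_stepF {G : CNF} (hG : Sat G α) (z : ℕ) : Sat (stepF s α G z) α := by
  rw [stepF]
  split
  · rw [restrict_eq_restrictA]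
    exact sat_restrictA α (sat_pclosure α s hG) _
  · exact sat_pclosure α s hG

theorem pclosure_restrictA_rel {G : CNF} (hG : Sat G α) (W : Finset ℕ) :
    ∃ U, W ⊆ U ∧ pclosure s (restrictA α G W) = restrictA α (pclosure s G) U := by
  obtain ⟨Wg, hWgsub, hWg⟩ := pclosure_eq_restrictA α s hG
  obtain ⟨Wg', -, hWg'⟩ := pclosure_eq_restrictA α s (sat_restrictA α hG W)
  refine ⟨W ∪ Wg', Finset.subset_union_left, ?_⟩
  rw [hWg', restrictA_restrictA, hWg, restrictA_restrictA]
  have hsub : Wg ⊆ W ∪ Wg' := by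
    intro w hw
    by_contra hnot
    have hw1 : w ∈ (restrictA α G (W ∪ Wg')).vars :=
      Finset.mem_sdiff.2 ⟨hWgsub hw, hnot⟩
    have hw2 : w ∈ (pclosure s (restrictA α G W)).vars := by
      rwa [hWg', restrictA_restrictA]
    have hw3 := vars_pclosure_restrictA_subset α s hG W hw2
    rw [hWg, vars_restrictA, Finset.mem_sdiff] at hw3
    exact hw3.2 hw
  rw [Finset.union_eq_right.2 hsub]

theorem stepF_restrictA {G : CNF} (hG : Sat G α) (W : Finset ℕ) (z : ℕ) :
    ∃ U, W ⊆ U ∧ stepF s α (restrictA α G W) z = restrictA α (stepF s α G z) U := by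
  obtain ⟨U₀, hWU₀, hpc⟩ := pclosure_restrictA_rel α s hG W
  set H := pclosure s G with hH
  refine ⟨U₀, hWU₀, ?_⟩
  by_cases hz' : z ∈ (pclosure s (restrictA α G W)).vars
  · have hzH : z ∈ H.vars := by
      have := hz'
      rw [hpc, vars_restrictA, Finset.mem_sdiff] at this
      exact this.1
    rw [stepF, if_pos hz', stepF, if_pos hzH, hpc, restrict_restrictA,
      restrict_eq_restrictA, restrictA_restrictA, Finset.insert_eq]
  · by_cases hzH : z ∈ H.vars
    · have hzU₀ : z ∈ U₀ := by
        by_contra hc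
        exact hz' (by rw [hpc, vars_restrictA]; exact Finset.mem_sdiff.2 ⟨hzH, hc⟩)
      rw [stepF, if_neg hz', stepF, if_pos hzH, hpc, restrict_eq_restrictA,
        restrictA_restrictA]
      congr 1
      rw [Finset.union_eq_right.2 (Finset.singleton_subset_iff.2 hzU₀)]
    · have hz'' : z ∉ (pclosure s (restrictA α G W)).vars := hz'
      rw [stepF, if_neg hz', stepF, if_neg hzH, hpc]

theorem guessed_restrictA : ∀ (π : List ℕ) (G : CNF) (W : Finset ℕ), Sat G α →
    Guessed s α x (restrictA α G W) π → Guessed s α x G π := by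
  intro π
  induction π with
  | nil => intro G W _ h; exact absurd h (Guessed_nil s x α _)
  | cons z rest ih =>
    intro G W hG h
    have hxin' : x ∈ (pclosure s (restrictA α G W)).vars := Guessed_mem_vars s x h
    have hxin : x ∈ (pclosure s G).vars := vars_pclosure_restrictA_subset α s hG W hxin'
    rw [Guessed_cons, if_neg (by simpa using hxin)]
    rw [Guessed_cons, if_neg (by simpa using hxin')] at h
    by_cases hzx : z = x
    · rw [if_pos hzx]; trivial
    · rw [if_neg hzx] at h ⊢
      obtain ⟨U, -, hstep⟩ := stepF_restrictA α s hG W z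
      rw [hstep] at h
      exact ih (stepF s α G z) U (sat_stepF α s hG z) h

end Chunk5
section Chunk6
variable (α : ℕ → Bool) (s : ℕ) (x y : ℕ)

theorem guessed_erase : ∀ (π : List ℕ) (G : CNF) (W : Finset ℕ), Sat G α → y ∈ W →
    Guessed s α x (restrictA α G W) (π.erase y) → Guessed s α x G π := by
  intro π
  induction π with
  | nil => intro G W _ _ h; exact absurd h (Guessed_nil s x α _)
  | cons z rest ih =>
    intro G W hG hyW h
    by_cases hzy : z = y
    · subst hzy
      rw [List.erase_cons_head] at h
      set G' := restrictA α G W with hG'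
      have hxin' : x ∈ (pclosure s G').vars := Guessed_mem_vars s x h
      have hxin : x ∈ (pclosure s G).vars := vars_pclosure_restrictA_subset α s hG W hxin'
      rw [Guessed_cons, if_neg (by simpa using hxin)]
      by_cases hzx : z = x
      · rw [if_pos hzx]; trivial
      · rw [if_neg hzx]
        obtain ⟨U₀, hWU₀, hpc⟩ := pclosure_restrictA_rel α s hG W
        have h2 : Guessed s α x (pclosure s G') rest := (Guessed_pclosure s x α G' rest).2 h
        rw [hG', hpc] at h2
        set H := pclosure s G with hH
        by_cases hzH : z ∈ H.vars
        · have hzU₀ : z ∈ U₀ := hWU₀ hyW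
          rw [stepF, ← hH, if_pos hzH, restrict_eq_restrictA]
          have heq : restrictA α H U₀ = restrictA α (restrictA α H {z}) U₀ := by
            rw [restrictA_restrictA]
            congr 1
            rw [Finset.union_eq_right.2 (Finset.singleton_subset_iff.2 hzU₀)]
          rw [heq] at h2
          exact guessed_restrictA α s x rest _ U₀
            (sat_restrictA α (sat_pclosure α s hG) _) h2
        · rw [stepF, ← hH, if_neg hzH]
          exact guessed_restrictA α s x rest H U₀ (sat_pclosure α s hG) h2
    · rw [List.erase_cons_tail (by simp [hzy])] at h
      have hxin' : x ∈ (pclosure s (restrictA α G W)).vars := Guessed_mem_vars s x h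
      have hxin : x ∈ (pclosure s G).vars := vars_pclosure_restrictA_subset α s hG W hxin'
      rw [Guessed_cons, if_neg (by simpa using hxin)]
      rw [Guessed_cons, if_neg (by simpa using hxin')] at h
      by_cases hzx : z = x
      · rw [if_pos hzx]; trivial
      · rw [if_neg hzx] at h ⊢
        obtain ⟨U, hWU, hstep⟩ := stepF_restrictA α s hG W z
        rw [hstep] at h
        exact ih (stepF s α G z) U (sat_stepF α s hG z) (hWU hyW) h

end Chunk6
section Chunk7

theorem erase_insertIdx_aux (y : ℕ) :
    ∀ (i : ℕ) (l : List ℕ), y ∉ l → i ≤ l.length → (l.insertIdx i y).erase y = l := by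
  intro i
  induction i with
  | zero =>
    intro l _ _
    rw [List.insertIdx_zero, List.erase_cons_head]
  | succ i ih =>
    intro l hy hlen
    cases l with
    | nil => simp at hlen
    | cons a l =>
      have hay : a ≠ y := fun hc => hy (hc ▸ List.mem_cons_self (a := a) (l := l))
      rw [List.insertIdx_succ_cons, List.erase_cons_tail (by simp [hay])]
      rw [ih l (fun hc => hy (List.mem_cons_of_mem a hc)) (by simpa using hlen)]

theorem insertIdx_index_inj (y : ℕ) {l : List ℕ} (hy : y ∉ l) :
    ∀ {i j : ℕ}, i < j → j ≤ l.length → l.insertIdx i y ≠ l.insertIdx j y := by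
  intro i j hij hj heq
  have hi : i < l.length := lt_of_lt_of_le hij hj
  have e1 : (l.insertIdx i y)[i]'(by rw [List.length_insertIdx, if_pos (le_of_lt hi)]; omega) = y :=
    List.getElem_insertIdx_self (by rw [List.length_insertIdx, if_pos (le_of_lt hi)]; omega)
  have e2 : (l.insertIdx j y)[i]'(by rw [List.length_insertIdx, if_pos hj]; omega) = l[i]'hi :=
    List.getElem_insertIdx_of_lt hij (by rw [List.length_insertIdx, if_pos hj]; omega)
  have h1len : i < (l.insertIdx i y).length := by
    rw [List.length_insertIdx, if_pos (le_of_lt hi)]; omega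
  have h2len : i < (l.insertIdx j y).length := by
    rw [List.length_insertIdx, if_pos hj]; omega
  have hopt : (l.insertIdx i y)[i]? = (l.insertIdx j y)[i]? := by rw [heq]
  rw [List.getElem?_eq_getElem h1len, List.getElem?_eq_getElem h2len] at hopt
  have := Option.some.inj hopt
  rw [e1, e2] at this
  exact hy (this ▸ List.getElem_mem hi)

theorem countP_perms_eq_card (L : List ℕ) (hL : L.Nodup) (p : List ℕ → Bool) :
    L.permutations.countP p = (L.permutations.toFinset.filter (fun π => p π = true)).card := by
  rw [List.countP_eq_length_filter, ← List.toFinset_filter,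
    List.toFinset_card_of_nodup (List.Nodup.filter p (List.nodup_permutations L hL))]

end Chunk7
/-- Monotonicity of the guessing probability under restriction by a literal of `α`. -/
theorem Pguessed_monotone (s : ℕ) (F : CNF) (α : ℕ → Bool) (x y : ℕ)
    (hF : F.Satisfiable) (hα : Sat F α) (hx : x ∈ F.vars) (hy : y ∈ F.vars) :
    Pguessed s (restrict F (y, α y)) x α ≤ Pguessed s F x α := by
  set F' := restrict F (y, α y) with hF'def
  have hvars' : F'.vars = F.vars.erase y := rfl
  have hn1 : 1 ≤ F.vars.card := Finset.card_pos.2 ⟨y, hy⟩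
  obtain ⟨m, hm⟩ : ∃ m, F.vars.card = m + 1 := ⟨F.vars.card - 1, by omega⟩
  have hcard' : F'.vars.card = m := by
    rw [hvars', Finset.card_erase_of_mem hy]; omega
  set L := F.vars.toList with hL
  set L' := F'.vars.toList with hL'
  set p : List ℕ → Bool := fun π => decide (Guessed s α x F π) with hp
  set p' : List ℕ → Bool := fun π => decide (Guessed s α x F' π) with hp'
  set c := L.permutations.countP p with hc
  set c' := L'.permutations.countP p' with hc'
  have hPF : Pguessed s F x α = (c : ℝ) / (Nat.factorial (m + 1)) := by
    rw [Pguessed, hm]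
  have hPF' : Pguessed s F' x α = (c' : ℝ) / (Nat.factorial m) := by
    rw [Pguessed, hcard']
  -- the counting argument
  set T := L.permutations.toFinset.filter (fun π => p π = true) with hT
  set T' := L'.permutations.toFinset.filter (fun π => p' π = true) with hT'
  have hcT : c = T.card := countP_perms_eq_card L (Finset.nodup_toList F.vars) p
  have hcT' : c' = T'.card := countP_perms_eq_card L' (Finset.nodup_toList F'.vars) p'
  -- facts about elements of T'
  have hmemT' : ∀ π' ∈ T', List.Perm π' L' ∧ y ∉ π' ∧ π'.length = m ∧ Guessed s α x F' π' := by
    intro π' hπ'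
    rw [hT', Finset.mem_filter, List.mem_toFinset, List.mem_permutations] at hπ'
    obtain ⟨hperm, hpdec⟩ := hπ'
    refine ⟨hperm, ?_, ?_, of_decide_eq_true hpdec⟩
    · intro hyc
      have : y ∈ L' := hperm.mem_iff.1 hyc
      have : y ∈ F'.vars := Finset.mem_toList.1 this
      rw [hvars'] at this
      exact (Finset.mem_erase.1 this).1 rfl
    · rw [hperm.length_eq, hL', Finset.length_toList, hcard']
  have hyLperm : List.Perm (y :: L') L := by
    rw [← Multiset.coe_eq_coe, ← Multiset.cons_coe, hL, hL', Finset.coe_toList,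
      Finset.coe_toList, hvars', Finset.erase_val]
    exact Multiset.cons_erase (Finset.mem_def.1 hy)
  have key : (m + 1) * c' ≤ c := by
    rw [hcT, hcT']
    have := Finset.card_le_card_of_injOn
      (s := (Finset.range (m + 1)) ×ˢ T') (t := T)
      (fun a => a.2.insertIdx a.1 y)
      ?_ ?_
    · rwa [Finset.card_product, Finset.card_range] at this
    · rintro ⟨i, π'⟩ ha
      rw [Finset.mem_coe, Finset.mem_product] at ha
      obtain ⟨hi, hπ'⟩ := ha
      rw [Finset.mem_range] at hi
      obtain ⟨hperm, hynotin, hlen, hguess⟩ := hmemT' π' hπ'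
      have hile : i ≤ π'.length := by omega
      have hfperm : List.Perm (π'.insertIdx i y) L :=
        ((List.perm_insertIdx y π' hile).trans (hperm.cons y)).trans hyLperm
      rw [Finset.mem_coe, hT, Finset.mem_filter, List.mem_toFinset, List.mem_permutations]
      refine ⟨hfperm, decide_eq_true ?_⟩
      apply guessed_erase α s x y _ F {y} hα (Finset.mem_singleton_self y)
      rw [← restrict_eq_restrictA, ← hF'def]
      rwa [erase_insertIdx_aux y i π' hynotin hile]
    · rintro ⟨i, π'⟩ ha ⟨j, ρ'⟩ hb hab
      simp only [Finset.coe_product, Set.mem_prod, Finset.mem_coe, Finset.mem_range] at ha hb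
      obtain ⟨hi, hπ'⟩ := ha
      obtain ⟨hj, hρ'⟩ := hb
      obtain ⟨-, hynπ, hlenπ, -⟩ := hmemT' π' hπ'
      obtain ⟨-, hynρ, hlenρ, -⟩ := hmemT' ρ' hρ'
      have hile : i ≤ π'.length := by omega
      have hjle : j ≤ ρ'.length := by omega
      simp only at hab
      have hππ : π' = ρ' := by
        rw [← erase_insertIdx_aux y i π' hynπ hile, ← erase_insertIdx_aux y j ρ' hynρ hjle,
          hab]
      subst hππ
      have hij : i = j := by
        by_contra hne
        rcases Nat.lt_or_ge i j with hlt | hge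
        · exact insertIdx_index_inj y hynπ hlt hjle hab
        · have hgt : j < i := by omega
          exact insertIdx_index_inj y hynπ hgt hile hab.symm
      rw [hij]
  -- finish with real arithmetic
  rw [hPF, hPF', ← hF'def] at *
  rw [hPF', hPF]
  have hfacpos : (0:ℝ) < (Nat.factorial m : ℝ) := by
    exact_mod_cast Nat.factorial_pos m
  have hfacpos' : (0:ℝ) < (Nat.factorial (m+1) : ℝ) := by
    exact_mod_cast Nat.factorial_pos (m+1)
  rw [div_le_div_iff₀ hfacpos hfacpos']
  have hkeyR : ((m:ℝ) + 1) * (c' : ℝ) ≤ (c : ℝ) := by exact_mod_cast key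
  calc (c' : ℝ) * (Nat.factorial (m+1) : ℝ)
      = (((m:ℝ) + 1) * (c' : ℝ)) * (Nat.factorial m : ℝ) := by
        rw [Nat.factorial_succ]; push_cast; ring
    _ ≤ (c : ℝ) * (Nat.factorial m : ℝ) :=
        mul_le_mul_of_nonneg_right hkeyR (le_of_lt hfacpos)

end
end

section
/- Main bound via Jensen: let F be a satisfiable, s-implication-free CNF formula with n(F) ≥ 1, and suppose p_success(F^{[l]}, s) ≥ 2^{−c(F^{[l]})} for every l ∈ SL(F), the combined cost-decrease bound E_l[c(F^{[l]})] ≤ c(F) − n_N·2S/|SL(F)| − n_C/|SL(F)| holds, and S ≥ 2 ln 2 − 1. Then p_success(F, s) ≥ 2^{−c(F)}. -/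
attribute [local instance] Classical.propDecidable

noncomputable section

/- ===== auxiliary lemmas ===== -/

lemma restrict_vars (F : CNF) (y : ℕ) (c : Bool) :
    (restrict F (y, c)).vars = F.vars.erase y := rfl

lemma sat_update_of_sat_restrict {F : CNF} {l : ℕ × Bool} {α : ℕ → Bool}
    (h : Sat (restrict F l) α) :
    Sat F (fun y => if y = l.1 then l.2 else α y) := by
  intro C hC
  by_cases hl : l ∈ C
  · exact ⟨l, hl, by simp [litSat]⟩
  · have hC' : C.filter (fun m => m ≠ (l.1, !l.2)) ∈ (restrict F l).clauses := by
      simp only [restrict, Finset.mem_image, Finset.mem_filter]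
      exact ⟨C, ⟨hC, hl⟩, rfl⟩
    obtain ⟨m, hm, hms⟩ := h _ hC'
    rw [Finset.mem_filter] at hm
    refine ⟨m, hm.1, ?_⟩
    have h1 : m.1 ≠ l.1 := by
      intro he
      have hm2 : m.2 = l.2 := by
        by_contra h2
        exact hm.2 (Prod.ext he (Bool.eq_not_of_ne h2))
      have hml : m = l := Prod.ext he hm2
      exact hl (hml ▸ hm.1)
    have hms' : α m.1 = m.2 := hms
    simp only [litSat, h1, if_neg h1]
    exact hms'

lemma sat_restrict_of_sat {F : CNF} {α : ℕ → Bool} {l : ℕ × Bool}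
    (hα : Sat F α) (hl : litSat α l) : Sat (restrict F l) α := by
  intro C hC
  simp only [restrict, Finset.mem_image, Finset.mem_filter] at hC
  obtain ⟨D, ⟨hD, hlD⟩, rfl⟩ := hC
  obtain ⟨m, hm, hms⟩ := hα D hD
  refine ⟨m, Finset.mem_filter.mpr ⟨hm, ?_⟩, hms⟩
  rintro rfl
  have hms' : α l.1 = !l.2 := hms
  have hl' : α l.1 = l.2 := hl
  rw [hl'] at hms'
  simp at hms'

lemma sat_of_restrict {F : CNF} {l : ℕ × Bool} (h : (restrict F l).Satisfiable) :
    F.Satisfiable := by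
  obtain ⟨α, hα⟩ := h
  exact ⟨_, sat_update_of_sat_restrict hα⟩

lemma restrict_sat_iff {F : CNF} {x : ℕ} {b : Bool} :
    (restrict F (x, b)).Satisfiable ↔ ∃ α, Sat F α ∧ α x = b := by
  constructor
  · rintro ⟨α, hα⟩
    exact ⟨_, sat_update_of_sat_restrict hα, by simp⟩
  · rintro ⟨α, hα, hx⟩
    exact ⟨α, sat_restrict_of_sat hα hx⟩

lemma mem_SL_iff {F : CNF} {l : ℕ × Bool} :
    l ∈ SL F ↔ l.1 ∈ F.vars ∧ ∃ α, Sat F α ∧ α l.1 = l.2 := by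
  obtain ⟨x, b⟩ := l
  simp only [SL, Finset.mem_filter, Finset.mem_product, Finset.mem_insert,
    Finset.mem_singleton]
  constructor
  · rintro ⟨⟨hx, -⟩, hs⟩
    exact ⟨hx, restrict_sat_iff.mp hs⟩
  · rintro ⟨hx, hs⟩
    exact ⟨⟨hx, by cases b <;> simp⟩, restrict_sat_iff.mpr hs⟩

lemma fiber_card {F : CNF} (hF : F.Satisfiable) (x : ℕ) (hx : x ∈ F.vars) :
    ((SL F).filter (fun l => l.1 = x)).card = if Frozen F x then 1 else 2 := by
  obtain ⟨α₀, hα₀⟩ := hF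
  by_cases hfr : Frozen F x
  · rw [if_pos hfr, Finset.card_eq_one]
    refine ⟨(x, α₀ x), ?_⟩
    ext l
    obtain ⟨y, c⟩ := l
    simp only [Finset.mem_filter, Finset.mem_singleton]
    constructor
    · rintro ⟨hl, h1⟩
      have hyx : y = x := h1
      subst hyx
      obtain ⟨-, β, hβ, hβx⟩ := mem_SL_iff.mp hl
      have hβx' : β y = c := hβx
      have hcc : c = α₀ y := by rw [← hβx']; exact hfr.2 β α₀ hβ hα₀
      rw [hcc]
    · rintro h
      injection h with h1 h2
      subst h1
      subst h2
      exact ⟨mem_SL_iff.mpr ⟨hx, α₀, hα₀, rfl⟩, rfl⟩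
  · rw [if_neg hfr]
    have hne : ∃ α β, Sat F α ∧ Sat F β ∧ α x ≠ β x := by
      by_contra h
      push_neg at h
      exact hfr ⟨hx, fun α β hα hβ => h α β hα hβ⟩
    obtain ⟨α, β, hα, hβ, hab⟩ := hne
    have hmem : ∀ b, (x, b) ∈ SL F := by
      intro b
      by_cases hb : α x = b
      · exact mem_SL_iff.mpr ⟨hx, α, hα, hb⟩
      · have hb' : β x = b := by
          cases b <;> cases h1 : α x <;> cases h2 : β x <;> simp_all
        exact mem_SL_iff.mpr ⟨hx, β, hβ, hb'⟩
    have hset : (SL F).filter (fun l => l.1 = x) = {(x, true), (x, false)} := by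
      ext l
      obtain ⟨y, c⟩ := l
      simp only [Finset.mem_filter, Finset.mem_insert, Finset.mem_singleton]
      constructor
      · rintro ⟨-, h1⟩
        have hyx : y = x := h1
        subst hyx
        cases c <;> simp
      · rintro (h | h) <;>
        · injection h with h1 h2
          subst h1
          subst h2
          exact ⟨hmem _, rfl⟩
    rw [hset]
    rw [Finset.card_insert_of_notMem (by simp), Finset.card_singleton]

lemma SL_card {F : CNF} (hF : F.Satisfiable) :
    (SL F).card = 2 * (F.vars.filter (fun x => ¬ Frozen F x)).card
      + (F.vars.filter (fun x => Frozen F x)).card := by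
  rw [Finset.card_eq_sum_card_fiberwise (f := fun l => l.1) (t := F.vars)
    (fun l hl => (mem_SL_iff.mp hl).1)]
  rw [Finset.sum_congr rfl (fun x hx => fiber_card hF x hx)]
  rw [Finset.sum_ite, Finset.sum_const, Finset.sum_const, smul_eq_mul, smul_eq_mul]
  omega

lemma impliedVars_eq_empty {F : CNF} {s : ℕ} (h : ImplicationFree F s) :
    impliedVars F s = ∅ := by
  ext x
  simp only [impliedVars, Finset.mem_filter, Finset.notMem_empty, iff_false, not_and]
  intro hx h'
  rcases h' with h' | h'
  · exact h (x, true) hx h'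
  · exact h (x, false) hx h'

lemma pclosure_eq_self {F : CNF} {s : ℕ} (h : ImplicationFree F s) :
    pclosure s F = F := by
  unfold pclosure
  cases F.vars.card with
  | zero => rfl
  | succ k =>
    rw [closureAux]
    rw [dif_neg]
    rw [impliedVars_eq_empty h]
    exact Finset.not_nonempty_empty

lemma runPPSZ_nil (s : ℕ) (β : ℕ → Bool) (F : CNF) :
    runPPSZ s β F [] = pclosure s F := rfl

lemma runPPSZ_cons (s : ℕ) (β : ℕ → Bool) (F : CNF) (y : ℕ) (π : List ℕ) :
    runPPSZ s β F (y :: π) = runPPSZ s β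
      (if y ∈ (pclosure s F).vars then restrict (pclosure s F) (y, β y)
       else pclosure s F) π := rfl

lemma closureAux_sat (s : ℕ) : ∀ (k : ℕ) (F : CNF),
    (closureAux s k F).Satisfiable → F.Satisfiable := by
  intro k
  induction k with
  | zero => exact fun F h => h
  | succ k ih =>
    intro F h
    rw [closureAux] at h
    split at h
    · exact sat_of_restrict (ih _ h)
    · exact h

lemma pclosure_sat {s : ℕ} {F : CNF} (h : (pclosure s F).Satisfiable) :
    F.Satisfiable := closureAux_sat s F.vars.card F h

lemma runPPSZ_sat (s : ℕ) (β : ℕ → Bool) : ∀ (π : List ℕ) (F : CNF),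
    (runPPSZ s β F π).clauses = ∅ → F.Satisfiable := by
  intro π
  induction π with
  | nil =>
    intro F h
    rw [runPPSZ_nil] at h
    apply pclosure_sat (s := s)
    exact ⟨fun _ => true, fun C hC => absurd hC (by rw [h]; exact Finset.notMem_empty C)⟩
  | cons y π ih =>
    intro F h
    rw [runPPSZ_cons] at h
    have h2 := ih _ h
    by_cases hc : y ∈ (pclosure s F).vars
    · rw [if_pos hc] at h2
      exact pclosure_sat (sat_of_restrict h2)
    · rw [if_neg hc] at h2
      exact pclosure_sat h2

lemma psuccess_eq_zero (s : ℕ) {F : CNF} (h : ¬ F.Satisfiable) : psuccess s F = 0 := by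
  unfold psuccess
  rw [Finset.sum_eq_zero, zero_div]
  intro b hb
  rw [List.countP_eq_zero.mpr, Nat.cast_zero]
  intro π hπ
  simp only [decide_eq_true_eq]
  exact fun hc => h (runPPSZ_sat s _ π F hc)

/- ===== permutation counting ===== -/

lemma perm_flatMap (L : List ℕ) (hN : L.Nodup) (hne : L ≠ []) :
    L.permutations.Perm (L.flatMap fun y => ((L.erase y).permutations.map (y :: ·))) := by
  have hconsinj : ∀ y : ℕ, Function.Injective (fun π : List ℕ => y :: π) := by
    intro y a b hab
    injection hab
  apply List.perm_of_nodup_nodup_toFinset_eq (List.nodup_permutations _ hN)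
  · rw [List.nodup_flatMap]
    constructor
    · intro y hy
      exact (List.nodup_permutations _ (hN.erase y)).map (hconsinj y)
    · refine List.Pairwise.imp ?_ hN
      intro a b hab z hz1 hz2
      simp only [List.mem_map] at hz1 hz2
      obtain ⟨w1, -, rfl⟩ := hz1
      obtain ⟨w2, -, h2⟩ := hz2
      exact hab (by injection h2.symm)
  · ext z
    simp only [List.mem_toFinset, List.mem_permutations, List.mem_flatMap, List.mem_map]
    constructor
    · intro hz
      match z with
      | [] => exact absurd (hz.symm.eq_nil) hne
      | a :: w =>
        rw [List.cons_perm_iff_perm_erase] at hz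
        exact ⟨a, hz.1, w, hz.2, rfl⟩
    · rintro ⟨y, hy, w, hw, rfl⟩
      exact List.cons_perm_iff_perm_erase.mpr ⟨hy, hw⟩

lemma countP_flatMap {α β : Type} (p : β → Bool) (l : List α) (f : α → List β) :
    (l.flatMap f).countP p = (l.map (fun a => (f a).countP p)).sum := by
  induction l with
  | nil => simp
  | cons a t ih => simp [List.countP_append, ih]

lemma sum_map_nodup (L : List ℕ) (hN : L.Nodup) (g : ℕ → ℕ) :
    (L.map g).sum = ∑ y ∈ L.toFinset, g y := by
  induction L with
  | nil => simp
  | cons a t ih =>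
    rw [List.map_cons, List.sum_cons, List.toFinset_cons,
      Finset.sum_insert (by rw [List.mem_toFinset]; exact (List.nodup_cons.mp hN).1),
      ih (List.nodup_cons.mp hN).2]

lemma countP_perm_head (L : List ℕ) (hN : L.Nodup) (hne : L ≠ []) (p : List ℕ → Bool) :
    L.permutations.countP p
      = ∑ y ∈ L.toFinset, (L.erase y).permutations.countP (fun π => p (y :: π)) := by
  rw [(perm_flatMap L hN hne).countP_eq]
  rw [countP_flatMap]
  rw [show (fun a => (((L.erase a).permutations.map (a :: ·)).countP p))
      = fun a => (L.erase a).permutations.countP (fun π => p (a :: π)) from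
    funext fun a => List.countP_map]
  exact sum_map_nodup L hN _

/- ===== recurrence ===== -/

def cnt (s : ℕ) (β : ℕ → Bool) (F : CNF) : ℕ :=
  F.vars.toList.permutations.countP (fun π => decide ((runPPSZ s β F π).clauses = ∅))

def num (s : ℕ) (F : CNF) : ℝ := ∑ b ∈ F.vars.powerset, (cnt s (asg b) F : ℝ)

lemma psuccess_eq (s : ℕ) (F : CNF) :
    psuccess s F = num s F / (2 ^ F.vars.card * Nat.factorial F.vars.card) := rfl

lemma runPPSZ_congr (s : ℕ) {β β' : ℕ → Bool} : ∀ (π : List ℕ) (F : CNF),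
    (∀ y ∈ π, β y = β' y) → runPPSZ s β F π = runPPSZ s β' F π := by
  intro π
  induction π with
  | nil => intro F _; rfl
  | cons y π ih =>
    intro F h
    rw [runPPSZ_cons, runPPSZ_cons, h y List.mem_cons_self]
    exact ih _ (fun z hz => h z (List.mem_cons_of_mem _ hz))

lemma cnt_congr {s : ℕ} {β β' : ℕ → Bool} (G : CNF)
    (h : ∀ z ∈ G.vars, β z = β' z) : cnt s β G = cnt s β' G := by
  unfold cnt
  apply List.countP_congr
  intro π hπ
  have hperm := List.mem_permutations.mp hπ
  have hmem : ∀ z ∈ π, β z = β' z := fun z hz =>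
    h z (Finset.mem_toList.mp (hperm.mem_iff.mp hz))
  rw [runPPSZ_congr s π G hmem]

lemma cnt_rec {s : ℕ} {F : CNF} (hfree : ImplicationFree F s) (hn : F.vars.Nonempty)
    (β : ℕ → Bool) :
    cnt s β F = ∑ y ∈ F.vars, cnt s β (restrict F (y, β y)) := by
  unfold cnt
  have hN := F.vars.nodup_toList
  have hne : F.vars.toList ≠ [] := by
    rw [ne_eq, Finset.toList_eq_nil]
    exact Finset.nonempty_iff_ne_empty.mp hn
  rw [countP_perm_head _ hN hne, Finset.toList_toFinset]
  refine Finset.sum_congr rfl ?_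
  intro y hy
  have hstep : ∀ π, runPPSZ s β F (y :: π) = runPPSZ s β (restrict F (y, β y)) π := by
    intro π
    rw [runPPSZ_cons, pclosure_eq_self hfree, if_pos hy]
  have h1 : (F.vars.toList.erase y).permutations.countP
        (fun π => decide ((runPPSZ s β F (y :: π)).clauses = ∅))
      = (F.vars.toList.erase y).permutations.countP
        (fun π => decide ((runPPSZ s β (restrict F (y, β y)) π).clauses = ∅)) := by
    apply List.countP_congr
    intro π hπ
    rw [hstep]
  rw [h1]
  have hperm : (F.vars.toList.erase y).Perm ((restrict F (y, β y)).vars.toList) := by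
    apply List.perm_of_nodup_nodup_toFinset_eq (hN.erase y) (Finset.nodup_toList _)
    ext z
    rw [restrict_vars]
    simp only [List.mem_toFinset, Finset.mem_toList, hN.mem_erase_iff, Finset.mem_erase]
  rw [(hperm.permutations).countP_eq]

lemma num_rec {s : ℕ} {F : CNF} (hfree : ImplicationFree F s) (hn : F.vars.Nonempty) :
    num s F = ∑ l ∈ F.vars ×ˢ ({true, false} : Finset Bool), num s (restrict F l) := by
  rw [Finset.sum_product]
  unfold num
  have step1 : ∀ b ∈ F.vars.powerset, (cnt s (asg b) F : ℝ)
      = ∑ y ∈ F.vars, (cnt s (asg b) (restrict F (y, asg b y)) : ℝ) := by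
    intro b hb
    rw [cnt_rec hfree hn (asg b)]
    push_cast
    rfl
  rw [Finset.sum_congr rfl step1, Finset.sum_comm]
  refine Finset.sum_congr rfl ?_
  intro y hy
  have hdisj : Disjoint ((F.vars.erase y).powerset)
      (((F.vars.erase y).powerset).image (insert y)) := by
    rw [Finset.disjoint_left]
    rintro b hb hb2
    rw [Finset.mem_powerset] at hb
    simp only [Finset.mem_image, Finset.mem_powerset] at hb2
    obtain ⟨c, hc, rfl⟩ := hb2
    exact (Finset.notMem_erase y F.vars) (hb (Finset.mem_insert_self y c))
  have hps : F.vars.powerset = (F.vars.erase y).powerset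
      ∪ ((F.vars.erase y).powerset).image (insert y) := by
    conv_lhs => rw [← Finset.insert_erase hy]
    exact Finset.powerset_insert _ _
  rw [hps, Finset.sum_union hdisj]
  have hinj : ∀ a ∈ (F.vars.erase y).powerset, ∀ b ∈ (F.vars.erase y).powerset,
      insert y a = insert y b → a = b := by
    intro a ha b hb hab
    rw [Finset.mem_powerset] at ha hb
    have hya : y ∉ a := fun h => Finset.notMem_erase y F.vars (ha h)
    have hyb : y ∉ b := fun h => Finset.notMem_erase y F.vars (hb h)
    rw [← Finset.erase_insert hya, hab, Finset.erase_insert hyb]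
  rw [Finset.sum_image hinj]
  have h1 : ∀ b ∈ (F.vars.erase y).powerset,
      (cnt s (asg b) (restrict F (y, asg b y)) : ℝ)
      = (cnt s (asg b) (restrict F (y, false)) : ℝ) := by
    intro b hb
    rw [Finset.mem_powerset] at hb
    have hyb : y ∉ b := fun h => Finset.notMem_erase y F.vars (hb h)
    have : asg b y = false := by simp [asg, hyb]
    rw [this]
  have h2 : ∀ b ∈ (F.vars.erase y).powerset,
      (cnt s (asg (insert y b)) (restrict F (y, asg (insert y b) y)) : ℝ)
      = (cnt s (asg b) (restrict F (y, true)) : ℝ) := by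
    intro b hb
    rw [Finset.mem_powerset] at hb
    have ht : asg (insert y b) y = true := by simp [asg]
    rw [ht]
    congr 1
    apply cnt_congr
    intro z hz
    rw [restrict_vars] at hz
    have hzy : z ≠ y := (Finset.mem_erase.mp hz).1
    simp [asg, Finset.mem_insert, hzy]
  rw [Finset.sum_congr rfl h1, Finset.sum_congr rfl h2]
  rw [Finset.sum_pair (by decide : (true : Bool) ≠ false)]
  simp only [restrict_vars]
  rw [add_comm]

lemma psuccess_rec {s : ℕ} {F : CNF} (hfree : ImplicationFree F s)
    (hn : F.vars.Nonempty) :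
    psuccess s F = (2 * (F.vars.card : ℝ))⁻¹
      * ∑ l ∈ F.vars ×ˢ ({true, false} : Finset Bool), psuccess s (restrict F l) := by
  obtain ⟨k, hk⟩ : ∃ k, F.vars.card = k + 1 :=
    ⟨F.vars.card - 1, by have := Finset.card_pos.mpr hn; omega⟩
  have hrv : ∀ l ∈ F.vars ×ˢ ({true, false} : Finset Bool),
      (restrict F l).vars.card = k := by
    rintro ⟨y, c⟩ hl
    rw [Finset.mem_product] at hl
    rw [restrict_vars, Finset.card_erase_of_mem hl.1, hk]
    omega
  have hps : ∀ l ∈ F.vars ×ˢ ({true, false} : Finset Bool),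
      psuccess s (restrict F l)
        = num s (restrict F l) / (2 ^ k * Nat.factorial k) := by
    intro l hl
    rw [psuccess_eq, hrv l hl]
  rw [psuccess_eq, num_rec hfree hn, Finset.sum_congr rfl hps, ← Finset.sum_div, hk]
  have hfac : ((Nat.factorial (k + 1) : ℝ)) = (k + 1) * Nat.factorial k := by
    rw [Nat.factorial_succ]; push_cast; ring
  have hne1 : ((2:ℝ) ^ k) ≠ 0 := by positivity
  have hne2 : ((Nat.factorial k : ℝ)) ≠ 0 := by
    exact_mod_cast Nat.factorial_ne_zero k
  have hne3 : ((k : ℝ) + 1) ≠ 0 := by positivity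
  rw [hfac]
  push_cast
  rw [inv_mul_eq_div, div_div]
  congr 1
  ring

/- ===== analytic part ===== -/

lemma jensen_rpow (t : Finset (ℕ × Bool)) (ht : t.Nonempty) (c : ℕ × Bool → ℝ)
    (M : ℝ) (hM : M = (t.card : ℝ)) :
    M * (2:ℝ) ^ (-(M⁻¹ * ∑ l ∈ t, c l)) ≤ ∑ l ∈ t, (2:ℝ) ^ (-(c l)) := by
  subst hM
  have hMpos : (0:ℝ) < (t.card : ℝ) := by exact_mod_cast Finset.card_pos.mpr ht
  have hconv := convexOn_exp.map_sum_le (t := t) (w := fun _ => ((t.card : ℝ))⁻¹)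
    (p := fun l => Real.log 2 * (-(c l))) (fun _ _ => by positivity)
    (by rw [Finset.sum_const, nsmul_eq_mul]; exact mul_inv_cancel₀ (ne_of_gt hMpos))
    (fun _ _ => Set.mem_univ _)
  simp only [smul_eq_mul] at hconv
  have h1 : ∑ l ∈ t, ((t.card : ℝ))⁻¹ * (Real.log 2 * -(c l))
      = Real.log 2 * -(((t.card : ℝ))⁻¹ * ∑ l ∈ t, c l) := by
    rw [← Finset.mul_sum,
      show (∑ l ∈ t, Real.log 2 * -(c l)) = Real.log 2 * -(∑ l ∈ t, c l) by
        rw [← Finset.mul_sum, Finset.sum_neg_distrib]]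
    ring
  rw [h1] at hconv
  have h4 : (2:ℝ) ^ (-(((t.card : ℝ))⁻¹ * ∑ l ∈ t, c l))
      ≤ ((t.card : ℝ))⁻¹ * ∑ l ∈ t, (2:ℝ) ^ (-(c l)) := by
    rw [Real.rpow_def_of_pos (by norm_num : (0:ℝ) < 2)]
    refine le_trans hconv (le_of_eq ?_)
    rw [← Finset.mul_sum]
    congr 1
    refine Finset.sum_congr rfl fun l _ => ?_
    rw [Real.rpow_def_of_pos (by norm_num : (0:ℝ) < 2)]
  calc (t.card : ℝ) * (2:ℝ) ^ (-(((t.card : ℝ))⁻¹ * ∑ l ∈ t, c l))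
      ≤ (t.card : ℝ) * (((t.card : ℝ))⁻¹ * ∑ l ∈ t, (2:ℝ) ^ (-(c l))) :=
        mul_le_mul_of_nonneg_left h4 hMpos.le
    _ = ∑ l ∈ t, (2:ℝ) ^ (-(c l)) := by field_simp


lemma final_ineq (A Fr M N S : ℝ) (hA : 0 ≤ A) (hFr : 0 ≤ Fr)
    (hMeq : M = 2*A + Fr) (hNeq : A + Fr = N) (hM1 : 1 ≤ M)
    (hS0 : 2 * Real.log 2 - 1 ≤ S) :
    1 ≤ (2*N)⁻¹ * M * (2:ℝ) ^ (A * (2*S) / M + Fr / M) := by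
  have hL : 0 < Real.log 2 := Real.log_pos (by norm_num)
  have hMpos : (0:ℝ) < M := lt_of_lt_of_le one_pos hM1
  have hNpos : (0:ℝ) < N := by linarith
  have hM' : M ≠ 0 := ne_of_gt hMpos
  have hN' : N ≠ 0 := ne_of_gt hNpos
  have hE2 : 2*N/M ≤ (2:ℝ) ^ (A * (2*S) / M + Fr / M) := by
    rw [Real.rpow_def_of_pos (by norm_num : (0:ℝ) < 2)]
    rw [← Real.exp_log (show (0:ℝ) < 2*N/M by positivity)]
    apply Real.exp_le_exp.mpr
    have hlog : Real.log (2*N/M) ≤ Real.log 2 + (2*N/M - 2)/2 := by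
      have h2 := Real.log_le_sub_one_of_pos (show (0:ℝ) < (2*N/M)/2 by positivity)
      rw [Real.log_div (by positivity) (by norm_num)] at h2
      linarith
    have ht : (2*N/M - 2)/2 = -A/M := by
      have h7 : 2*N - 2*M = -(2*A) := by linarith
      have e0 : 2*N/M - 2 = (2*N - 2*M)/M := by
        field_simp
      rw [e0, h7]
      ring
    have hmain : Real.log 2 * M - A ≤ Real.log 2 * (A*(2*S) + Fr) := by
      nlinarith [mul_nonneg hA (sq_nonneg (2*Real.log 2 - 1)),
        mul_nonneg (sub_nonneg.mpr hS0)
          (mul_nonneg (mul_nonneg (by norm_num : (0:ℝ) ≤ 2) hL.le) hA)]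
    have hkey : Real.log 2 + -A/M ≤ Real.log 2 * (A * (2*S) / M + Fr / M) := by
      have h5 := mul_le_mul_of_nonneg_right hmain (inv_nonneg.mpr hMpos.le)
      have e1 : Real.log 2 + -A/M = (Real.log 2 * M - A) * M⁻¹ := by
        field_simp
        ring
      have e2 : Real.log 2 * (A * (2*S) / M + Fr / M)
          = (Real.log 2 * (A*(2*S) + Fr)) * M⁻¹ := by ring
      rw [e1, e2]
      exact h5
    linarith
  have h3 : (2*N)⁻¹ * M * (2*N/M) ≤ (2*N)⁻¹ * M * (2:ℝ) ^ (A * (2*S) / M + Fr / M) :=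
    mul_le_mul_of_nonneg_left hE2 (by positivity)
  have h4 : (2*N)⁻¹ * M * (2*N/M) = 1 := by field_simp
  linarith

/-- Main bound via Jensen: given the induction hypothesis on all `F^{[l]}`, the combined
cost-decrease bound, and `S ≥ 2 ln 2 - 1`, we get `p_success(F,s) ≥ 2^{-c(F)}`. -/
theorem psuccess_ge_cost (s : ℕ) (S : ℝ) (F : CNF) (hF : F.Satisfiable)
    (hfree : ImplicationFree F s) (hn : F.vars.Nonempty)
    (hS0 : 2 * Real.log 2 - 1 ≤ S) (hS1 : S ≤ 1)
    (hsucc : ∀ l ∈ SL F, (2:ℝ) ^ (-(totalCost s S (restrict F l))) ≤ psuccess s (restrict F l))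
    (hcost : ((SL F).card : ℝ)⁻¹ * ∑ l ∈ SL F, totalCost s S (restrict F l) ≤
      totalCost s S F
        - ((F.vars.filter (fun x => ¬ Frozen F x)).card : ℝ) * (2 * S) / ((SL F).card : ℝ)
        - ((F.vars.filter (fun x => Frozen F x)).card : ℝ) / ((SL F).card : ℝ)) :
    (2:ℝ) ^ (-(totalCost s S F)) ≤ psuccess s F := by
    classical
  have hSLne : (SL F).Nonempty := by
    obtain ⟨α₀, hα₀⟩ := hF
    obtain ⟨x, hx⟩ := hn
    exact ⟨(x, α₀ x), mem_SL_iff.mpr ⟨hx, α₀, hα₀, rfl⟩⟩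
  have hMcardPos : 0 < (SL F).card := Finset.card_pos.mpr hSLne
  have hMpos : (0:ℝ) < ((SL F).card : ℝ) := by exact_mod_cast hMcardPos
  have hM1 : (1:ℝ) ≤ ((SL F).card : ℝ) := by exact_mod_cast hMcardPos
  have hNpos : (0:ℝ) < (F.vars.card : ℝ) := by
    exact_mod_cast Finset.card_pos.mpr hn
  have hrec : psuccess s F
      = (2 * (F.vars.card : ℝ))⁻¹ * ∑ l ∈ SL F, psuccess s (restrict F l) := by
    rw [psuccess_rec hfree hn]
    congr 1
    refine (Finset.sum_subset (Finset.filter_subset _ _) ?_).symm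
    intro l hl hl'
    exact psuccess_eq_zero s (fun hsat => hl' (Finset.mem_filter.mpr ⟨hl, hsat⟩))
  have hMeq : ((SL F).card : ℝ)
      = 2 * ((F.vars.filter (fun x => ¬ Frozen F x)).card : ℝ)
        + ((F.vars.filter (fun x => Frozen F x)).card : ℝ) := by
    rw [SL_card hF]; push_cast; ring
  have hNeq : ((F.vars.filter (fun x => ¬ Frozen F x)).card : ℝ)
      + ((F.vars.filter (fun x => Frozen F x)).card : ℝ) = (F.vars.card : ℝ) := by
    rw [← Finset.card_filter_add_card_filter_not (s := F.vars)
      (p := fun x => Frozen F x)]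
    push_cast; ring
  have hfin := final_ineq ((F.vars.filter (fun x => ¬ Frozen F x)).card : ℝ)
    ((F.vars.filter (fun x => Frozen F x)).card : ℝ)
    ((SL F).card : ℝ) (F.vars.card : ℝ) S
    (by positivity) (by positivity) hMeq hNeq hM1 hS0
  set A := ((F.vars.filter (fun x => ¬ Frozen F x)).card : ℝ) with hAdef
  set Fr := ((F.vars.filter (fun x => Frozen F x)).card : ℝ) with hFrdef
  set M := ((SL F).card : ℝ) with hMdef
  set N := ((F.vars.card : ℝ)) with hNdef
  set C := totalCost s S F with hCdef
  have hexp : (A * (2*S) / M + Fr / M) + -C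
      ≤ -(M⁻¹ * ∑ l ∈ SL F, totalCost s S (restrict F l)) := by
    linarith [hcost]
  calc (2:ℝ) ^ (-C)
      = 1 * (2:ℝ) ^ (-C) := (one_mul _).symm
    _ ≤ ((2*N)⁻¹ * M * (2:ℝ) ^ (A * (2*S) / M + Fr / M)) * (2:ℝ) ^ (-C) :=
        mul_le_mul_of_nonneg_right hfin (Real.rpow_nonneg (by norm_num) _)
    _ = (2*N)⁻¹ * (M * (2:ℝ) ^ ((A * (2*S) / M + Fr / M) + -C)) := by
        rw [Real.rpow_add (by norm_num : (0:ℝ) < 2) (A * (2*S) / M + Fr / M) (-C)]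
        generalize (2:ℝ) ^ (A * (2*S) / M + Fr / M) = X
        generalize (2:ℝ) ^ (-C) = Y
        ring
    _ ≤ (2*N)⁻¹ * (M * (2:ℝ)
          ^ (-(M⁻¹ * ∑ l ∈ SL F, totalCost s S (restrict F l)))) := by
        refine mul_le_mul_of_nonneg_left ?_ (inv_nonneg.mpr (by linarith))
        exact mul_le_mul_of_nonneg_left
          (Real.rpow_le_rpow_of_exponent_le (by norm_num) hexp) hMpos.le
    _ ≤ (2*N)⁻¹ * (∑ l ∈ SL F, (2:ℝ) ^ (-(totalCost s S (restrict F l)))) := by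
        refine mul_le_mul_of_nonneg_left ?_ (inv_nonneg.mpr (by linarith))
        exact jensen_rpow (SL F) hSLne (fun l => totalCost s S (restrict F l)) M hMdef
    _ ≤ (2*N)⁻¹ * (∑ l ∈ SL F, psuccess s (restrict F l)) := by
        refine mul_le_mul_of_nonneg_left
          (Finset.sum_le_sum fun l hl => hsucc l hl) (inv_nonneg.mpr (by linarith))
    _ = psuccess s F := hrec.symm


end
end
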